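/- Let n ≥ 0, k ≥ 1, and let G be a connected (n,k)-graph. If v is a vertex of G whose neighborhood contains a k-matching, then d(v) ≥ n + 2k + 1. -/

import Mathlib

/-- A graph `G` is `k`-extendable if it has a perfect matching and every matching
consisting of `k` pairwise disjoint edges extends to a perfect matching. -/
def SimpleGraph.IsKExtendable {V : Type*} [Fintype V] (G : SimpleGraph V) (k : ℕ) : Prop :=
  (∃ M : G.Subgraph, M.IsPerfectMatching) ∧
  ∀ M : G.Subgraph, M.IsMatching → M.edgeSet.ncard = k →
    ∃ P : G.Subgraph, P.IsPerfectMatching ∧ M ≤ P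

/-- A graph `G` is an `(n,k)`-graph if `|G| ≥ n + 2k + 2`, `|G| ≡ n (mod 2)`, and
deleting any `n` vertices leaves a `k`-extendable graph. -/
def SimpleGraph.IsNKGraph {V : Type*} [Fintype V] [DecidableEq V]
    (G : SimpleGraph V) (n k : ℕ) : Prop :=
  n + 2 * k + 2 ≤ Fintype.card V ∧ Fintype.card V % 2 = n % 2 ∧
  ∀ S : Finset V, S.card = n →
    SimpleGraph.IsKExtendable (G.induce ((Sᶜ : Finset V) : Set V)) k

/-- If `v` is a vertex of a connected `(n,k)`-graph (with `k ≥ 1`) whose neighborhood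
contains `k` pairwise disjoint edges, then `d(v) ≥ n + 2k + 1`.  The `k`-matching in
`N(v)` is encoded by functions `e : Fin k → V × V` giving the endpoints of the `k`
edges, with all `2k` endpoints distinct, adjacent to `v`, and joined in pairs. -/
theorem nkGraph_degree_of_matching_in_nbhd {V : Type*} [Fintype V] [DecidableEq V]
    (G : SimpleGraph V) [DecidableRel G.Adj] (n k : ℕ) (hk : 1 ≤ k)
    (hconn : G.Connected) (h : G.IsNKGraph n k) (v : V)
    (e : Fin k → V × V)
    (hadj : ∀ i, G.Adj (e i).1 (e i).2 ∧ G.Adj v (e i).1 ∧ G.Adj v (e i).2)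
    (hinj : Function.Injective
      (fun p : Fin k × Bool => if p.2 then (e p.1).1 else (e p.1).2)) :
    n + 2 * k + 1 ≤ G.degree v := by
  classical
  by_contra hd
  push_neg at hd
  -- the set of the 2k matched endpoints
  set f : Fin k × Bool → V := fun p => if p.2 then (e p.1).1 else (e p.1).2 with hf
  set A : Finset V := Finset.image f Finset.univ with hA
  have hAcard : A.card = 2 * k := by
    rw [hA, Finset.card_image_of_injective _ hinj]
    simp only [Finset.card_univ, Fintype.card_prod, Fintype.card_fin, Fintype.card_bool]
    ring
  have hmemA : ∀ x, x ∈ A ↔ ∃ i : Fin k, x = (e i).1 ∨ x = (e i).2 := by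
    intro x
    simp only [hA, Finset.mem_image, Finset.mem_univ, true_and]
    constructor
    · rintro ⟨⟨i, b⟩, rfl⟩
      exact ⟨i, by cases b <;> simp [hf]⟩
    · rintro ⟨i, hi | hi⟩
      exacts [⟨(i, true), by simp [hf, hi]⟩, ⟨(i, false), by simp [hf, hi]⟩]
  have hAsub : A ⊆ G.neighborFinset v := by
    intro x hx
    rw [hmemA] at hx
    rw [SimpleGraph.mem_neighborFinset]
    obtain ⟨i, hi | hi⟩ := hx <;> rw [hi]
    exacts [(hadj i).2.1, (hadj i).2.2]
  have hvA : v ∉ A := by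
    intro hv
    have := hAsub hv
    rw [SimpleGraph.mem_neighborFinset] at this
    exact G.irrefl this
  -- find S of size n containing N(v) \ A, avoiding v and A
  have hNA : (G.neighborFinset v \ A).card ≤ n := by
    have := Finset.card_sdiff_of_subset hAsub
    have hdeg : (G.neighborFinset v).card = G.degree v := rfl
    omega
  have hins : (insert v A).card = 2 * k + 1 := by
    rw [Finset.card_insert_of_notMem hvA, hAcard]
  obtain ⟨S, hS1, hS2, hS3⟩ := Finset.exists_subsuperset_card_eq
      (s := G.neighborFinset v \ A) (t := (insert v A)ᶜ) (n := n)
      (by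
        intro x hx
        rw [Finset.mem_sdiff] at hx
        rw [Finset.mem_compl, Finset.mem_insert]
        push_neg
        refine ⟨?_, hx.2⟩
        rintro rfl
        simpa using hx.1)
      hNA
      (by
        rw [Finset.card_compl, hins]
        have := h.1
        omega)
  -- the induced graph
  set W : Set V := ((Sᶜ : Finset V) : Set V) with hW
  have hnotS : ∀ x, x ∈ insert v A → x ∈ W := by
    intro x hx
    have : x ∉ S := fun hxS => by
      have := hS2 hxS
      rw [Finset.mem_compl] at this
      exact this hx
    simpa [hW] using this
  have hvW : v ∈ W := hnotS v (Finset.mem_insert_self _ _)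
  have he1W : ∀ i : Fin k, (e i).1 ∈ W := fun i =>
    hnotS _ (Finset.mem_insert_of_mem ((hmemA _).mpr ⟨i, Or.inl rfl⟩))
  have he2W : ∀ i : Fin k, (e i).2 ∈ W := fun i =>
    hnotS _ (Finset.mem_insert_of_mem ((hmemA _).mpr ⟨i, Or.inr rfl⟩))
  set H := G.induce W with hH
  obtain ⟨_, hext⟩ := h.2.2 S hS3
  -- build the matching subgraph
  set M₀ : H.Subgraph :=
    { verts := {x : W | ∃ i : Fin k, (x : V) = (e i).1 ∨ (x : V) = (e i).2}
      Adj := fun x y => ∃ i : Fin k,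
        ((x : V) = (e i).1 ∧ (y : V) = (e i).2) ∨ ((x : V) = (e i).2 ∧ (y : V) = (e i).1)
      adj_sub := by
        rintro x y ⟨i, ⟨hx, hy⟩ | ⟨hx, hy⟩⟩
        · exact (by rw [hx, hy]; exact (hadj i).1 : G.Adj (x : V) (y : V))
        · exact (by rw [hx, hy]; exact (hadj i).1.symm : G.Adj (x : V) (y : V))
      edge_vert := by
        rintro x y ⟨i, ⟨hx, hy⟩ | ⟨hx, hy⟩⟩
        exacts [⟨i, Or.inl hx⟩, ⟨i, Or.inr hx⟩]
      symm := by
        constructor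
        rintro x y ⟨i, ⟨hx, hy⟩ | ⟨hx, hy⟩⟩
        exacts [⟨i, Or.inr ⟨hy, hx⟩⟩, ⟨i, Or.inl ⟨hy, hx⟩⟩] } with hM₀
  -- key injectivity facts
  have hinj' : ∀ {i j : Fin k} {b c : Bool}, f (i, b) = f (j, c) → i = j ∧ b = c := by
    intro i j b c hfc
    have := hinj hfc
    exact ⟨congrArg Prod.fst this, congrArg Prod.snd this⟩
  have h11 : ∀ {i j : Fin k}, (e i).1 = (e j).1 → i = j := fun hij =>
    (hinj' (b := true) (c := true) (by simpa [hf] using hij)).1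
  have h22 : ∀ {i j : Fin k}, (e i).2 = (e j).2 → i = j := fun hij =>
    (hinj' (b := false) (c := false) (by simpa [hf] using hij)).1
  have h12 : ∀ {i j : Fin k}, (e i).1 ≠ (e j).2 := by
    intro i j hij
    have := (hinj' (b := true) (c := false) (by simpa [hf] using hij)).2
    simp at this
  have hM₀match : M₀.IsMatching := by
    rintro x ⟨i, hx | hx⟩
    · refine ⟨⟨(e i).2, he2W i⟩, ⟨i, Or.inl ⟨hx, rfl⟩⟩, ?_⟩
      rintro y ⟨j, ⟨hx', hy⟩ | ⟨hx', hy⟩⟩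
      · obtain rfl := h11 (hx.symm.trans hx')
        exact Subtype.ext hy
      · exact absurd (hx.symm.trans hx') h12
    · refine ⟨⟨(e i).1, he1W i⟩, ⟨i, Or.inr ⟨hx, rfl⟩⟩, ?_⟩
      rintro y ⟨j, ⟨hx', hy⟩ | ⟨hx', hy⟩⟩
      · exact absurd (hx'.symm.trans hx) h12
      · obtain rfl := h22 (hx.symm.trans hx')
        exact Subtype.ext hy
  have hM₀card : M₀.edgeSet.ncard = k := by
    have hrange : M₀.edgeSet =
        Set.range (fun i : Fin k => s(⟨(e i).1, he1W i⟩, (⟨(e i).2, he2W i⟩ : W))) := by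
      ext s
      induction s with
      | _ x y =>
        rw [SimpleGraph.Subgraph.mem_edgeSet]
        constructor
        · rintro ⟨i, ⟨hx, hy⟩ | ⟨hx, hy⟩⟩
          · exact ⟨i, by rw [Sym2.eq_iff]; left; exact ⟨(Subtype.ext hx).symm, (Subtype.ext hy).symm⟩⟩
          · exact ⟨i, by rw [Sym2.eq_iff]; right; exact ⟨(Subtype.ext hy).symm, (Subtype.ext hx).symm⟩⟩
        · rintro ⟨i, hi⟩
          rw [Sym2.eq_iff] at hi
          obtain ⟨hx, hy⟩ | ⟨hx, hy⟩ := hi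
          · exact ⟨i, Or.inl ⟨by rw [← hx], by rw [← hy]⟩⟩
          · exact ⟨i, Or.inr ⟨by rw [← hy], by rw [← hx]⟩⟩
    rw [hrange, ← Set.image_univ, Set.ncard_image_of_injective _ ?_, Set.ncard_univ,
      Nat.card_eq_fintype_card, Fintype.card_fin]
    intro i j hij
    rw [Sym2.eq_iff] at hij
    obtain ⟨hx, _⟩ | ⟨hx, _⟩ := hij
    · exact h11 (congrArg Subtype.val hx)
    · exact absurd (congrArg Subtype.val hx) h12
  obtain ⟨P, hP, hMP⟩ := hext M₀ hM₀match hM₀card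
  -- derive contradiction
  set v' : W := ⟨v, hvW⟩ with hv'
  obtain ⟨u, hu, -⟩ := hP.1 (hP.2 v')
  have huN : (u : V) ∈ G.neighborFinset v := by
    rw [SimpleGraph.mem_neighborFinset]
    exact (P.adj_sub hu : G.Adj (v' : V) (u : V))
  have huS : (u : V) ∉ S := by
    have := u.2
    simp only [hW, Finset.coe_compl, Set.mem_compl_iff, Finset.mem_coe] at this
    exact this
  have huA : (u : V) ∈ A := by
    by_contra huA
    exact huS (hS1 (Finset.mem_sdiff.mpr ⟨huN, huA⟩))
  rw [hmemA] at huA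
  obtain ⟨i, hi | hi⟩ := huA
  · -- u = (e i).1, partner is (e i).2
    have hadj2 : P.Adj u ⟨(e i).2, he2W i⟩ := hMP.2 ⟨i, Or.inl ⟨hi, rfl⟩⟩
    obtain ⟨w, hw, hwu⟩ := hP.1 (hP.2 u)
    have h1 : v' = w := hwu v' hu.symm
    have h2 : (⟨(e i).2, he2W i⟩ : W) = w := hwu _ hadj2
    have : v = (e i).2 := congrArg Subtype.val (h1.trans h2.symm)
    exact G.irrefl (this ▸ (hadj i).2.2)
  · have hadj2 : P.Adj u ⟨(e i).1, he1W i⟩ := hMP.2 ⟨i, Or.inr ⟨hi, rfl⟩⟩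
    obtain ⟨w, hw, hwu⟩ := hP.1 (hP.2 u)
    have h1 : v' = w := hwu v' hu.symm
    have h2 : (⟨(e i).1, he1W i⟩ : W) = w := hwu _ hadj2
    have : v = (e i).1 := congrArg Subtype.val (h1.trans h2.symm)
    exact G.irrefl (this ▸ (hadj i).2.1)
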